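/- arXiv:1605.05564 — 3 statements merged into one kernel-verified Lean document; each statement's English description precedes it below -/
import Mathlib

section
/- Let n ≥ 2, x ∈ ℝ^n with x ≠ 0, and ε > 0. Let y^⊥ denote the orthogonal projection of y onto the hyperplane orthogonal to x, and let P(y) denote the reflection of y with respect to that hyperplane. Then the average of |x + y| over y in the ball B(0,ε) equals the average of (|x + y| + |x + P(y)|)/2 over B(0,ε), and this is at least the average of |x + y^⊥| over y ∈ B(0,ε). -/
open scoped RealInnerProductSpace

open MeasureTheory Metric

theorem average_reflection (n : ℕ) (hn : 2 ≤ n) (x : EuclideanSpace ℝ (Fin n))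
    (hx : x ≠ 0) (ε : ℝ) (hε : 0 < ε) :
    (⨍ y in ball (0 : EuclideanSpace ℝ (Fin n)) ε, ‖x + y‖) =
      (⨍ y in ball (0 : EuclideanSpace ℝ (Fin n)) ε,
        (‖x + y‖ + ‖x + (y - (2 * (⟪x, y⟫ / ‖x‖ ^ 2)) • x)‖) / 2) ∧
    (⨍ y in ball (0 : EuclideanSpace ℝ (Fin n)) ε,
        (‖x + y‖ + ‖x + (y - (2 * (⟪x, y⟫ / ‖x‖ ^ 2)) • x)‖) / 2) ≥
      ⨍ y in ball (0 : EuclideanSpace ℝ (Fin n)) ε,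
        ‖x + (y - (⟪x, y⟫ / ‖x‖ ^ 2) • x)‖ := by
  classical
  set B := ball (0 : EuclideanSpace ℝ (Fin n)) ε with hB
  set e : EuclideanSpace ℝ (Fin n) ≃ₗᵢ[ℝ] EuclideanSpace ℝ (Fin n) :=
    Submodule.reflection ((ℝ ∙ x)ᗮ) with he_def
  have he : ∀ y : EuclideanSpace ℝ (Fin n),
      e y = y - (2 * (⟪x, y⟫ / ‖x‖ ^ 2)) • x := by
    intro y
    rw [he_def, Submodule.reflection_apply, Submodule.starProjection_orthogonal_val,
      Submodule.starProjection_singleton]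
    simp only [RCLike.ofReal_real_eq_id, id_eq]
    module
  have hpre : e ⁻¹' B = B := by
    ext y
    simp [hB, mem_ball_zero_iff, e.norm_map]
  have hchg : ∀ g : EuclideanSpace ℝ (Fin n) → ℝ,
      ∫ y in B, g (e y) = ∫ y in B, g y := by
    intro g
    conv_lhs => rw [← hpre]
    exact e.measurePreserving.setIntegral_preimage_emb
      e.toMeasurableEquiv.measurableEmbedding g B
  have hcin : Continuous fun y : EuclideanSpace ℝ (Fin n) => ⟪x, y⟫ :=
    continuous_const.inner continuous_id
  have hcont2 : Continuous fun y : EuclideanSpace ℝ (Fin n) =>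
      ‖x + (y - (2 * (⟪x, y⟫ / ‖x‖ ^ 2)) • x)‖ :=
    (continuous_const.add (continuous_id.sub
      ((continuous_const.mul (hcin.div_const _)).smul continuous_const))).norm
  have hcont3 : Continuous fun y : EuclideanSpace ℝ (Fin n) =>
      ‖x + (y - (⟪x, y⟫ / ‖x‖ ^ 2) • x)‖ :=
    (continuous_const.add (continuous_id.sub
      ((hcin.div_const _).smul continuous_const))).norm
  have hI1 : IntegrableOn (fun y => ‖x + y‖) B :=
    (((continuous_const.add continuous_id).norm).continuousOn.integrableOn_compact
      (isCompact_closedBall _ _)).mono_set ball_subset_closedBall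
  have hI2 : IntegrableOn
      (fun y => ‖x + (y - (2 * (⟪x, y⟫ / ‖x‖ ^ 2)) • x)‖) B :=
    (hcont2.continuousOn.integrableOn_compact
      (isCompact_closedBall _ _)).mono_set ball_subset_closedBall
  have hI3 : IntegrableOn
      (fun y => ‖x + (y - (⟪x, y⟫ / ‖x‖ ^ 2) • x)‖) B :=
    (hcont3.continuousOn.integrableOn_compact
      (isCompact_closedBall _ _)).mono_set ball_subset_closedBall
  have hgg : ∫ y in B, ‖x + (y - (2 * (⟪x, y⟫ / ‖x‖ ^ 2)) • x)‖ = ∫ y in B, ‖x + y‖ := by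
    have h := hchg (fun z => ‖x + z‖)
    simp_rw [he] at h
    exact h
  constructor
  · rw [setAverage_eq, setAverage_eq, integral_div, integral_add hI1 hI2, hgg]
    congr 1
    ring
  · rw [ge_iff_le, setAverage_eq, setAverage_eq, smul_eq_mul, smul_eq_mul]
    have key : ∀ y : EuclideanSpace ℝ (Fin n),
        ‖x + (y - (⟪x, y⟫ / ‖x‖ ^ 2) • x)‖ ≤
          (‖x + y‖ + ‖x + (y - (2 * (⟪x, y⟫ / ‖x‖ ^ 2)) • x)‖) / 2 := by
      intro y
      set c := ⟪x, y⟫ / ‖x‖ ^ 2 with hc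
      have h2 : x + (y - c • x) =
          (2⁻¹ : ℝ) • ((x + y) + (x + (y - (2 * c) • x))) := by module
      rw [h2, norm_smul]
      have : ‖(2⁻¹ : ℝ)‖ = 2⁻¹ := by norm_num
      rw [this, div_eq_inv_mul]
      exact mul_le_mul_of_nonneg_left (norm_add_le _ _) (by norm_num)
    refine mul_le_mul_of_nonneg_left ?_ (by positivity)
    exact setIntegral_mono_on hI3 ((hI1.add hI2).div_const 2) measurableSet_ball
      (fun y _ => key y)
end

section
/- There exists a constant C(n) > 0, depending only on the dimension n ≥ 2, such that for all x ∈ ℝ^n, all unit vectors ν, all ε > 0, and all β ∈ (0,1]: ((1-β)/2)(|x + εν| + |x - εν|) + β·(average of |y| over y ∈ B(x,ε)) ≥ |x| + C(n)·β·ε²/(2(|x| + ε)). -/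
open MeasureTheory Metric
open scoped RealInnerProductSpace

section DriftAux

variable {n : ℕ}

lemma drift_integrableOn_ball_cont {f : EuclideanSpace ℝ (Fin n) → ℝ} (hf : Continuous f)
    (c : EuclideanSpace ℝ (Fin n)) (r : ℝ) : IntegrableOn f (ball c r) :=
  (hf.continuousOn.integrableOn_compact (isCompact_closedBall c r)).mono_set
    ball_subset_closedBall

lemma drift_translate_integral (x : EuclideanSpace ℝ (Fin n)) (ε : ℝ)
    (g : EuclideanSpace ℝ (Fin n) → ℝ) :
    ∫ y in ball x ε, g y = ∫ z in ball (0 : EuclideanSpace ℝ (Fin n)) ε, g (x + z) := by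
  have h := (measurePreserving_add_left (volume : Measure (EuclideanSpace ℝ (Fin n))) x).setIntegral_preimage_emb
    (Homeomorph.addLeft x).measurableEmbedding g (ball x ε)
  have hpre : (fun z => x + z) ⁻¹' ball x ε = ball (0 : EuclideanSpace ℝ (Fin n)) ε := by
    ext z; simp [mem_ball, dist_eq_norm]
  rw [← h, hpre]

lemma drift_odd_integral (e : EuclideanSpace ℝ (Fin n)) (ε : ℝ) :
    ∫ z in ball (0 : EuclideanSpace ℝ (Fin n)) ε, ⟪e, z⟫ = 0 := by
  have h := (Measure.measurePreserving_neg (volume : Measure (EuclideanSpace ℝ (Fin n)))).setIntegral_preimage_emb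
    (Homeomorph.neg (EuclideanSpace ℝ (Fin n))).measurableEmbedding
    (fun z => ⟪e, z⟫) (ball 0 ε)
  have hpre : (Neg.neg : EuclideanSpace ℝ (Fin n) → _) ⁻¹' ball 0 ε = ball 0 ε := by
    ext z; simp [mem_ball, dist_eq_norm]
  rw [hpre] at h
  have h2 : ∫ z in ball (0 : EuclideanSpace ℝ (Fin n)) ε, ⟪e, -z⟫
      = - ∫ z in ball (0 : EuclideanSpace ℝ (Fin n)) ε, ⟪e, z⟫ := by
    simp [inner_neg_right, integral_neg]
  rw [h2] at h
  linarith

lemma drift_inner_integral (x e : EuclideanSpace ℝ (Fin n)) (ε : ℝ) :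
    ∫ y in ball x ε, ⟪e, y⟫ = ⟪e, x⟫ * (volume (ball x ε)).toReal := by
  rw [drift_translate_integral]
  have hcont : Continuous (fun z : EuclideanSpace ℝ (Fin n) => ⟪e, z⟫) :=
    Continuous.inner continuous_const continuous_id
  have h1 : ∀ z : EuclideanSpace ℝ (Fin n), ⟪e, x + z⟫ = ⟪e, x⟫ + ⟪e, z⟫ := fun z =>
    inner_add_right e x z
  simp_rw [h1]
  rw [integral_add ((integrableOn_const_iff (C := ⟪e, x⟫) (s := ball (0 : EuclideanSpace ℝ (Fin n)) ε)
    (μ := volume) enorm_ne_top).mpr (Or.inr measure_ball_lt_top))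
    (drift_integrableOn_ball_cont hcont 0 ε), setIntegral_const, measureReal_def, drift_odd_integral]
  rw [smul_eq_mul, add_zero, mul_comm, Measure.addHaar_ball_center volume x ε]

lemma drift_exists_orthonormal_pair (hn : 2 ≤ n) (e : EuclideanSpace ℝ (Fin n)) (he : ‖e‖ = 1) :
    ∃ f : EuclideanSpace ℝ (Fin n), ‖f‖ = 1 ∧ ⟪e, f⟫ = 0 := by
  have hne : e ≠ 0 := by intro h; rw [h] at he; simp at he
  have hrank : Module.finrank ℝ (EuclideanSpace ℝ (Fin n)) = (n - 1) + 1 := by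
    rw [finrank_euclideanSpace_fin]; omega
  have : Fact (Module.finrank ℝ (EuclideanSpace ℝ (Fin n)) = (n - 1) + 1) := ⟨hrank⟩
  have hfr : Module.finrank ℝ ((Submodule.span ℝ {e})ᗮ) = n - 1 :=
    Submodule.finrank_orthogonal_span_singleton hne
  have hpos : 0 < Module.finrank ℝ ((Submodule.span ℝ {e})ᗮ) := by omega
  have hbot : (Submodule.span ℝ {e})ᗮ ≠ ⊥ := by
    intro h
    rw [h, finrank_bot] at hpos
    omega
  obtain ⟨v, hv, hv0⟩ := Submodule.exists_mem_ne_zero_of_ne_bot hbot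
  refine ⟨‖v‖⁻¹ • v, ?_, ?_⟩
  · rw [norm_smul]; simp [norm_ne_zero_iff.mpr hv0]
  · have h0 : ⟪e, v⟫ = 0 := hv e (Submodule.mem_span_singleton_self e)
    rw [real_inner_smul_right, h0, mul_zero]

lemma drift_bessel_two {e f z : EuclideanSpace ℝ (Fin n)} (he : ‖e‖ = 1) (hf : ‖f‖ = 1)
    (hef : ⟪e, f⟫ = 0) : ⟪e, z⟫ ^ 2 + ⟪f, z⟫ ^ 2 ≤ ‖z‖ ^ 2 := by
  have h := real_inner_self_nonneg (x := z - ⟪e, z⟫ • e - ⟪f, z⟫ • f)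
  have he2 : ⟪e, e⟫ = 1 := by rw [real_inner_self_eq_norm_sq, he]; norm_num
  have hf2 : ⟪f, f⟫ = 1 := by rw [real_inner_self_eq_norm_sq, hf]; norm_num
  have hz2 : ⟪z, z⟫ = ‖z‖ ^ 2 := real_inner_self_eq_norm_sq z
  have hfe : ⟪f, e⟫ = 0 := by rwa [real_inner_comm]
  simp only [inner_sub_left, inner_sub_right, real_inner_smul_left, real_inner_smul_right,
    he2, hf2, hef, hfe, hz2] at h
  rw [real_inner_comm e z, real_inner_comm f z] at h
  nlinarith [h]

lemma drift_q_lower (hn : 2 ≤ n) (e : EuclideanSpace ℝ (Fin n)) (he : ‖e‖ = 1)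
    (b : ℝ) (hb : 0 ≤ b) (ε : ℝ) (hε : 0 < ε) :
    (ε ^ 2 / 4) * (volume (ball (0 : EuclideanSpace ℝ (Fin n)) (ε / 8))).toReal ≤
      ∫ y in ball (b • e) ε, (‖y‖ ^ 2 - ⟪e, y⟫ ^ 2) := by
  have he2 : ⟪e, e⟫ = 1 := by rw [real_inner_self_eq_norm_sq, he]; norm_num
  rw [drift_translate_integral]
  have hid : ∀ z : EuclideanSpace ℝ (Fin n),
      ‖b • e + z‖ ^ 2 - ⟪e, b • e + z⟫ ^ 2 = ‖z‖ ^ 2 - ⟪e, z⟫ ^ 2 := by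
    intro z
    have h1 : ‖b • e + z‖ ^ 2 = ‖b • e‖ ^ 2 + 2 * ⟪b • e, z⟫ + ‖z‖ ^ 2 := norm_add_sq_real _ _
    have h2 : ⟪e, b • e + z⟫ = b + ⟪e, z⟫ := by
      rw [inner_add_right, real_inner_smul_right, he2, mul_one]
    have h3 : ⟪b • e, z⟫ = b * ⟪e, z⟫ := real_inner_smul_left e z b
    have h4 : ‖b • e‖ ^ 2 = b ^ 2 := by
      rw [norm_smul, he, mul_one, Real.norm_eq_abs, sq_abs]
    rw [h1, h2, h3, h4]; ring
  simp_rw [hid]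
  obtain ⟨f, hf, hef⟩ := drift_exists_orthonormal_pair hn e he
  set p : EuclideanSpace ℝ (Fin n) := (5 * ε / 8) • f with hp
  have hpn : ‖p‖ = 5 * ε / 8 := by
    rw [hp, norm_smul, hf, mul_one, Real.norm_eq_abs, abs_of_pos (by linarith)]
  have hsub : ball p (ε / 8) ⊆ ball (0 : EuclideanSpace ℝ (Fin n)) ε := by
    intro z hz
    rw [mem_ball, dist_eq_norm] at hz ⊢
    have : ‖z‖ ≤ ‖z - p‖ + ‖p‖ := by
      simpa using norm_add_le (z - p) p
    rw [sub_zero]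
    rw [hpn] at this; linarith
  have hQcont : Continuous (fun z : EuclideanSpace ℝ (Fin n) => ‖z‖ ^ 2 - ⟪e, z⟫ ^ 2) :=
    (continuous_norm.pow 2).sub ((Continuous.inner continuous_const continuous_id).pow 2)
  have hQnn : ∀ z : EuclideanSpace ℝ (Fin n), 0 ≤ ‖z‖ ^ 2 - ⟪e, z⟫ ^ 2 := by
    intro z
    have h1 : |⟪e, z⟫| ≤ ‖z‖ := by simpa [he] using abs_real_inner_le_norm e z
    nlinarith [abs_nonneg ⟪e, z⟫, sq_abs ⟪e, z⟫]
  have hlow : ∀ z ∈ ball p (ε / 8), ε ^ 2 / 4 ≤ ‖z‖ ^ 2 - ⟪e, z⟫ ^ 2 := by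
    intro z hz
    rw [mem_ball, dist_eq_norm] at hz
    have hip : ⟪f, p⟫ = 5 * ε / 8 := by
      rw [hp, real_inner_smul_right, real_inner_self_eq_norm_sq, hf]; norm_num
    have h2 : |⟪f, z - p⟫| ≤ ‖z - p‖ := by simpa [hf] using abs_real_inner_le_norm f (z - p)
    have h3 : ⟪f, z - p⟫ = ⟪f, z⟫ - ⟪f, p⟫ := inner_sub_right f z p
    have h4 : ε / 2 ≤ ⟪f, z⟫ := by
      have := abs_le.mp h2
      rw [h3, hip] at this
      linarith [this.1]
    have h5 := drift_bessel_two (z := z) he hf hef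
    nlinarith
  calc (ε ^ 2 / 4) * (volume (ball (0 : EuclideanSpace ℝ (Fin n)) (ε / 8))).toReal
      = ∫ _z in ball p (ε / 8), (ε ^ 2 / 4) := by
        rw [setIntegral_const, measureReal_def, Measure.addHaar_ball_center volume p (ε / 8), smul_eq_mul, mul_comm]
    _ ≤ ∫ z in ball p (ε / 8), (‖z‖ ^ 2 - ⟪e, z⟫ ^ 2) := by
        apply setIntegral_mono_on ((integrableOn_const_iff enorm_ne_top).mpr (Or.inr measure_ball_lt_top))
          (drift_integrableOn_ball_cont hQcont _ _) measurableSet_ball hlow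
    _ ≤ ∫ z in ball (0 : EuclideanSpace ℝ (Fin n)) ε, (‖z‖ ^ 2 - ⟪e, z⟫ ^ 2) := by
        apply setIntegral_mono_set (drift_integrableOn_ball_cont hQcont _ _)
          (Filter.Eventually.of_forall hQnn) (HasSubset.Subset.eventuallyLE hsub)

lemma drift_pointwise_bound (e y : EuclideanSpace ℝ (Fin n)) (R : ℝ) (hR : 0 < R)
    (he : ‖e‖ = 1) (hy : ‖y‖ ≤ R) :
    ⟪e, y⟫ + (‖y‖ ^ 2 - ⟪e, y⟫ ^ 2) / (2 * R) ≤ ‖y‖ := by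
  have h1 : |⟪e, y⟫| ≤ ‖y‖ := by
    simpa [he] using abs_real_inner_le_norm e y
  have h3 := abs_le.mp h1
  have h2 : (‖y‖ ^ 2 - ⟪e, y⟫ ^ 2) / (2 * R) ≤ ‖y‖ - ⟪e, y⟫ := by
    rw [div_le_iff₀ (by positivity)]
    nlinarith [h3.1, h3.2]
  linarith

lemma drift_avg_lower (hn : 2 ≤ n) (x : EuclideanSpace ℝ (Fin n)) (ε : ℝ) (hε : 0 < ε) :
    ‖x‖ + ((1 / 8 : ℝ) ^ n / 4) * ε ^ 2 / (2 * (‖x‖ + ε)) ≤ ⨍ y in ball x ε, ‖y‖ := by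
  haveI : Nontrivial (EuclideanSpace ℝ (Fin n)) := by
    refine nontrivial_of_ne (EuclideanSpace.single (⟨0, by omega⟩ : Fin n) (1 : ℝ)) 0 ?_
    intro h
    have := congrArg norm h
    simp [EuclideanSpace.norm_single] at this
  obtain ⟨e, he, hxe⟩ : ∃ e : EuclideanSpace ℝ (Fin n), ‖e‖ = 1 ∧ x = ‖x‖ • e := by
    by_cases hx : x = 0
    · refine ⟨EuclideanSpace.single (⟨0, by omega⟩ : Fin n) (1 : ℝ), ?_, by simp [hx]⟩
      simp [EuclideanSpace.norm_single]
    · refine ⟨‖x‖⁻¹ • x, ?_, ?_⟩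
      · rw [norm_smul, Real.norm_eq_abs, abs_of_nonneg (by positivity)]
        field_simp [norm_ne_zero_iff.mpr hx]
      · rw [smul_smul, mul_inv_cancel₀ (norm_ne_zero_iff.mpr hx), one_smul]
  have he2 : ⟪e, e⟫ = 1 := by rw [real_inner_self_eq_norm_sq, he]; norm_num
  have hinner_x : ⟪e, x⟫ = ‖x‖ := by
    conv_lhs => rw [hxe]
    rw [real_inner_smul_right, he2, mul_one]
  have hR : (0 : ℝ) < ‖x‖ + ε := by positivity
  set Q : EuclideanSpace ℝ (Fin n) → ℝ := fun y => ‖y‖ ^ 2 - ⟪e, y⟫ ^ 2 with hQ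
  have hQcont : Continuous Q :=
    (continuous_norm.pow 2).sub ((Continuous.inner continuous_const continuous_id).pow 2)
  have hicont : Continuous (fun y : EuclideanSpace ℝ (Fin n) => ⟪e, y⟫) :=
    Continuous.inner continuous_const continuous_id
  have hpt : ∀ y ∈ ball x ε,
      ⟪e, y⟫ + (2 * (‖x‖ + ε))⁻¹ * Q y ≤ ‖y‖ := by
    intro y hy
    rw [mem_ball, dist_eq_norm] at hy
    have hyR : ‖y‖ ≤ ‖x‖ + ε := by
      have h : ‖y‖ ≤ ‖x‖ + ‖y - x‖ := by
        calc ‖y‖ = ‖x + (y - x)‖ := by rw [add_sub_cancel]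
          _ ≤ ‖x‖ + ‖y - x‖ := norm_add_le _ _
      linarith
    have := drift_pointwise_bound e y (‖x‖ + ε) hR he hyR
    rw [div_eq_inv_mul] at this
    exact this
  have hInt1 : IntegrableOn (fun y => ⟪e, y⟫ + (2 * (‖x‖ + ε))⁻¹ * Q y) (ball x ε) :=
    drift_integrableOn_ball_cont (hicont.add (continuous_const.mul hQcont)) x ε
  have hIntn : IntegrableOn (fun y : EuclideanSpace ℝ (Fin n) => ‖y‖) (ball x ε) :=
    drift_integrableOn_ball_cont continuous_norm x ε
  have hmono := setIntegral_mono_on hInt1 hIntn measurableSet_ball hpt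
  have hsplit : ∫ y in ball x ε, (⟪e, y⟫ + (2 * (‖x‖ + ε))⁻¹ * Q y)
      = ‖x‖ * (volume (ball x ε)).toReal
        + (2 * (‖x‖ + ε))⁻¹ * ∫ y in ball x ε, Q y := by
    rw [integral_add (drift_integrableOn_ball_cont hicont x ε)
      (drift_integrableOn_ball_cont (f := fun y => (2 * (‖x‖ + ε))⁻¹ * Q y) (continuous_const.mul hQcont) x ε),
      integral_const_mul, drift_inner_integral, hinner_x]
  have hq : (ε ^ 2 / 4) * (volume (ball (0 : EuclideanSpace ℝ (Fin n)) (ε / 8))).toReal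
      ≤ ∫ y in ball x ε, Q y := by
    have h := drift_q_lower hn e he ‖x‖ (norm_nonneg x) ε hε
    rwa [← hxe] at h
  set κ := (volume (ball (0 : EuclideanSpace ℝ (Fin n)) 1)).toReal with hκdef
  have hκpos : 0 < κ := ENNReal.toReal_pos (measure_ball_pos volume _ one_pos).ne'
    measure_ball_lt_top.ne
  have hV : (volume (ball x ε)).toReal = ε ^ n * κ := by
    rw [Measure.addHaar_ball volume x hε.le, ENNReal.toReal_mul,
      ENNReal.toReal_ofReal (by positivity), finrank_euclideanSpace_fin]
  have hW : (volume (ball (0 : EuclideanSpace ℝ (Fin n)) (ε / 8))).toReal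
      = (ε / 8) ^ n * κ := by
    rw [Measure.addHaar_ball volume 0 (by positivity), ENNReal.toReal_mul,
      ENNReal.toReal_ofReal (by positivity), finrank_euclideanSpace_fin]
  have hVpos : 0 < (volume (ball x ε)).toReal := by rw [hV]; positivity
  have hint_lower : ‖x‖ * (volume (ball x ε)).toReal
      + (2 * (‖x‖ + ε))⁻¹ * ((ε ^ 2 / 4) * ((ε / 8) ^ n * κ))
      ≤ ∫ y in ball x ε, ‖y‖ := by
    rw [← hW]
    have h2 : (2 * (‖x‖ + ε))⁻¹ * ((ε ^ 2 / 4) * (volume (ball (0 : EuclideanSpace ℝ (Fin n)) (ε / 8))).toReal)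
        ≤ (2 * (‖x‖ + ε))⁻¹ * ∫ y in ball x ε, Q y :=
      mul_le_mul_of_nonneg_left hq (by positivity)
    calc ‖x‖ * (volume (ball x ε)).toReal
        + (2 * (‖x‖ + ε))⁻¹ * ((ε ^ 2 / 4) * (volume (ball (0 : EuclideanSpace ℝ (Fin n)) (ε / 8))).toReal)
        ≤ ‖x‖ * (volume (ball x ε)).toReal + (2 * (‖x‖ + ε))⁻¹ * ∫ y in ball x ε, Q y := by
          linarith
      _ = ∫ y in ball x ε, (⟪e, y⟫ + (2 * (‖x‖ + ε))⁻¹ * Q y) := hsplit.symm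
      _ ≤ ∫ y in ball x ε, ‖y‖ := hmono
  rw [setAverage_eq, smul_eq_mul]
  have hfinal : ‖x‖ + (1 / 8 : ℝ) ^ n / 4 * ε ^ 2 / (2 * (‖x‖ + ε))
      = ((volume (ball x ε)).toReal)⁻¹ * (‖x‖ * (volume (ball x ε)).toReal
        + (2 * (‖x‖ + ε))⁻¹ * ((ε ^ 2 / 4) * ((ε / 8) ^ n * κ))) := by
    rw [hV]
    have h8 : ((ε / 8) : ℝ) ^ n = ε ^ n * (1 / 8) ^ n := by
      rw [div_pow, div_pow]; ring
    rw [h8]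
    field_simp
  rw [hfinal]
  exact mul_le_mul_of_nonneg_left hint_lower (by positivity)

end DriftAux

theorem drift_estimate (n : ℕ) (hn : 2 ≤ n) :
    ∃ C : ℝ, 0 < C ∧
      ∀ (x ν : EuclideanSpace ℝ (Fin n)) (ε β : ℝ), ‖ν‖ = 1 → 0 < ε →
        β ∈ Set.Ioc (0 : ℝ) 1 →
        ((1 - β) / 2) * (‖x + ε • ν‖ + ‖x - ε • ν‖) +
            β * ⨍ y in ball x ε, ‖y‖ ≥
          ‖x‖ + C * β * ε ^ 2 / (2 * (‖x‖ + ε)) := by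
  refine ⟨(1 / 8 : ℝ) ^ n / 4, by positivity, ?_⟩
  intro x ν ε β hν hε hβ
  obtain ⟨hβ0, hβ1⟩ := hβ
  set C : ℝ := (1 / 8 : ℝ) ^ n / 4 with hC
  have hCpos : 0 < C := by rw [hC]; positivity
  have hR : (0 : ℝ) < ‖x‖ + ε := by positivity
  have htri : 2 * ‖x‖ ≤ ‖x + ε • ν‖ + ‖x - ε • ν‖ := by
    have h1 : (x + ε • ν) + (x - ε • ν) = x + x := by abel
    have h2 : ‖x + x‖ ≤ ‖x + ε • ν‖ + ‖x - ε • ν‖ := by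
      rw [← h1]; exact norm_add_le _ _
    have h3 : ‖x + x‖ = 2 * ‖x‖ := by
      rw [← two_smul ℝ x, norm_smul, Real.norm_eq_abs]
      norm_num
    linarith
  have havg := drift_avg_lower hn x ε hε
  have h4 : β * (‖x‖ + C * ε ^ 2 / (2 * (‖x‖ + ε))) ≤ β * ⨍ y in ball x ε, ‖y‖ :=
    mul_le_mul_of_nonneg_left havg hβ0.le
  have h5 : (1 - β) * ‖x‖ ≤ ((1 - β) / 2) * (‖x + ε • ν‖ + ‖x - ε • ν‖) := by
    have hnn : 0 ≤ (1 - β) / 2 := by linarith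
    nlinarith [htri]
  have h6 : C * β * ε ^ 2 / (2 * (‖x‖ + ε)) = β * (C * ε ^ 2 / (2 * (‖x‖ + ε))) := by
    ring
  rw [ge_iff_le, h6]
  nlinarith [h4, h5]
end

section
/- Let μ be the probability measure on ℝ^n given by μ = β·L_{B(x,ε)} + ((1-β)/2)(δ_{x+εν} + δ_{x-εν}), where L_{B(x,ε)} is the uniform distribution on B(x,ε), ν is a unit vector, β ∈ (0,1], and let f(y) = η(c - |y|) with η > 0, c > 1. Then for every x ∈ B(0,1) and ε ∈ (0,1): ∫ f dμ ≤ f(x) - η·C(n)·β·ε²/(2(|x|+ε)), where C(n) is the constant from the drift estimate. -/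
open MeasureTheory Metric

section Aux
variable {n : ℕ}

lemma contIntOn {f : EuclideanSpace ℝ (Fin n) → ℝ} (hf : Continuous f)
    (x : EuclideanSpace ℝ (Fin n)) (ε : ℝ) : IntegrableOn f (ball x ε) volume :=
  (hf.continuousOn.integrableOn_compact (isCompact_closedBall x ε)).mono_set
    ball_subset_closedBall

-- odd integral vanishes
lemma int_inner_zero (v : EuclideanSpace ℝ (Fin n)) (ε : ℝ) :
    ∫ h in ball (0 : EuclideanSpace ℝ (Fin n)) ε, (inner ℝ v h : ℝ) = 0 := by
  have hemb : MeasurableEmbedding (Neg.neg : EuclideanSpace ℝ (Fin n) → _) :=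
    (Homeomorph.neg (EuclideanSpace ℝ (Fin n))).measurableEmbedding
  have hpre : (Neg.neg : EuclideanSpace ℝ (Fin n) → _) ⁻¹' ball 0 ε = ball 0 ε := by
    ext h; simp [mem_ball_zero_iff]
  have := (Measure.measurePreserving_neg (volume : Measure (EuclideanSpace ℝ (Fin n)))).setIntegral_preimage_emb
    hemb (fun h => (inner ℝ v h : ℝ)) (ball 0 ε)
  rw [hpre] at this
  have h2 : ∫ h in ball (0 : EuclideanSpace ℝ (Fin n)) ε, (inner ℝ v (-h) : ℝ)
      = - ∫ h in ball (0 : EuclideanSpace ℝ (Fin n)) ε, (inner ℝ v h : ℝ) := by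
    simp_rw [inner_neg_right]
    exact integral_neg _
  rw [h2] at this
  linarith

lemma int_inner_sq_invar {e e' : EuclideanSpace ℝ (Fin n)} (h : ‖e‖ = ‖e'‖) (ε : ℝ) :
    ∫ h in ball (0 : EuclideanSpace ℝ (Fin n)) ε, (inner ℝ e h : ℝ) ^ 2
      = ∫ h in ball (0 : EuclideanSpace ℝ (Fin n)) ε, (inner ℝ e' h : ℝ) ^ 2 := by
  set R := Submodule.reflection (ℝ ∙ (e - e'))ᗮ with hR
  have hre : R e = e' := Submodule.reflection_sub h
  have hmp : MeasurePreserving (R : EuclideanSpace ℝ (Fin n) → _) volume volume :=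
    R.measurePreserving
  have hemb : MeasurableEmbedding (R : EuclideanSpace ℝ (Fin n) → _) :=
    R.toHomeomorph.measurableEmbedding
  have hpre : (R : EuclideanSpace ℝ (Fin n) → _) ⁻¹' ball 0 ε = ball 0 ε := by
    ext h; simp [mem_ball_zero_iff]
  have key := hmp.setIntegral_preimage_emb hemb
    (fun h => (inner ℝ e h : ℝ) ^ 2) (ball 0 ε)
  rw [hpre] at key
  have hcongr : ∀ h, (inner ℝ e (R h) : ℝ) ^ 2 = (inner ℝ e' h : ℝ) ^ 2 := by
    intro h
    have h1 : (inner ℝ (R (R e)) (R h) : ℝ) = (inner ℝ (R e) h : ℝ) :=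
      R.inner_map_map (R e) h
    rw [hR, Submodule.reflection_reflection, ← hR] at h1
    rw [h1, hre]
  simp_rw [hcongr] at key
  exact key.symm

lemma norm_sq_sum (h : EuclideanSpace ℝ (Fin n)) : ‖h‖ ^ 2 = ∑ i, (h i) ^ 2 := by
  exact EuclideanSpace.real_norm_sq_eq h

lemma int_inner_sq (hn : 1 ≤ n) {e : EuclideanSpace ℝ (Fin n)} (he : ‖e‖ = 1) (ε : ℝ) :
    (n : ℝ) * ∫ h in ball (0 : EuclideanSpace ℝ (Fin n)) ε, (inner ℝ e h : ℝ) ^ 2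
      = ∫ h in ball (0 : EuclideanSpace ℝ (Fin n)) ε, ‖h‖ ^ 2 := by
  have hsum : ∀ h : EuclideanSpace ℝ (Fin n), ‖h‖ ^ 2 = ∑ i, (h i) ^ 2 := norm_sq_sum
  calc (n : ℝ) * ∫ h in ball (0 : EuclideanSpace ℝ (Fin n)) ε, (inner ℝ e h : ℝ) ^ 2
      = ∑ _i : Fin n, ∫ h in ball (0 : EuclideanSpace ℝ (Fin n)) ε, (inner ℝ e h : ℝ) ^ 2 := by
        simp [Finset.sum_const, nsmul_eq_mul]
    _ = ∑ i : Fin n, ∫ h in ball (0 : EuclideanSpace ℝ (Fin n)) ε,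
          (inner ℝ (EuclideanSpace.single i (1:ℝ)) h : ℝ) ^ 2 := by
        refine Finset.sum_congr rfl fun i _ => ?_
        exact int_inner_sq_invar (by rw [he, EuclideanSpace.norm_single, norm_one]) ε
    _ = ∑ i : Fin n, ∫ h in ball (0 : EuclideanSpace ℝ (Fin n)) ε, (h i) ^ 2 := by
        refine Finset.sum_congr rfl fun i _ => ?_
        congr 1; ext h
        rw [EuclideanSpace.inner_single_left]
        simp
    _ = ∫ h in ball (0 : EuclideanSpace ℝ (Fin n)) ε, ∑ i, (h i) ^ 2 := by
        rw [integral_finset_sum]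
        intro i _
        exact contIntOn ((PiLp.continuous_apply 2 _ i).pow 2) 0 ε
    _ = ∫ h in ball (0 : EuclideanSpace ℝ (Fin n)) ε, ‖h‖ ^ 2 := by
        refine setIntegral_congr_fun measurableSet_ball fun h _ => ?_
        rw [hsum]

lemma int_norm_sq_lb (hn : 2 ≤ n) {ε : ℝ} (hε : 0 < ε) :
    3 / 16 * ε ^ 2 * (volume (ball (0 : EuclideanSpace ℝ (Fin n)) ε)).toReal
      ≤ ∫ h in ball (0 : EuclideanSpace ℝ (Fin n)) ε, ‖h‖ ^ 2 := by
  haveI : Nonempty (Fin n) := ⟨⟨0, by omega⟩⟩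
  set E := EuclideanSpace ℝ (Fin n)
  haveI : Nontrivial E := by
    refine ⟨0, EuclideanSpace.single ⟨0, by omega⟩ (1:ℝ), fun h => ?_⟩
    have := congrArg norm h
    rw [EuclideanSpace.norm_single, norm_one, norm_zero] at this
    exact zero_ne_one this
  set B := ball (0 : E) ε
  set Bh := ball (0 : E) (ε / 2)
  have hsub : Bh ⊆ B := ball_subset_ball (by linarith)
  have hfin : volume B ≠ ⊤ := measure_ball_lt_top.ne
  have hfinh : volume Bh ≠ ⊤ := measure_ball_lt_top.ne
  -- volumes
  have hvol : volume B = ENNReal.ofReal (ε ^ n) * volume (ball (0:E) 1) := by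
    rw [Measure.addHaar_ball volume (0:E) hε.le, finrank_euclideanSpace_fin]
  have hvolh : volume Bh = ENNReal.ofReal ((ε/2) ^ n) * volume (ball (0:E) 1) := by
    rw [Measure.addHaar_ball volume (0:E) (by linarith : (0:ℝ) ≤ ε/2), finrank_euclideanSpace_fin]
  set V1 := (volume (ball (0:E) 1)).toReal with hV1
  have hV1fin : volume (ball (0:E) 1) ≠ ⊤ := measure_ball_lt_top.ne
  have hVB : (volume B).toReal = ε ^ n * V1 := by
    rw [hvol, ENNReal.toReal_mul, ENNReal.toReal_ofReal (by positivity)]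
  have hVBh : (volume Bh).toReal = (ε/2) ^ n * V1 := by
    rw [hvolh, ENNReal.toReal_mul, ENNReal.toReal_ofReal (by positivity)]
  have hV1nonneg : 0 ≤ V1 := ENNReal.toReal_nonneg
  have hratio : (ε/2) ^ n ≤ ε ^ n / 4 := by
    have h2 : (4:ℝ) ≤ 2 ^ n := by
      calc (4:ℝ) = 2 ^ 2 := by norm_num
      _ ≤ 2 ^ n := pow_le_pow_right₀ (by norm_num) hn
    rw [div_pow]
    rw [div_le_div_iff₀ (by positivity) (by norm_num)]
    calc ε ^ n * 4 ≤ ε ^ n * 2 ^ n := by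
          have : (0:ℝ) ≤ ε ^ n := by positivity
          nlinarith
      _ = ε ^ n * 2 ^ n := rfl
  -- diff set
  have hdiffvol : (volume (B \ Bh)).toReal = (volume B).toReal - (volume Bh).toReal := by
    rw [measure_diff hsub measurableSet_ball.nullMeasurableSet hfinh,
      ENNReal.toReal_sub_of_le (measure_mono hsub) hfin]
  have hlb : (ε/2)^2 * (volume (B \ Bh)).toReal ≤ ∫ h in B \ Bh, ‖h‖ ^ 2 := by
    refine setIntegral_ge_of_const_le_real (measurableSet_ball.diff measurableSet_ball)
      (((measure_mono (Set.diff_subset)).trans_lt measure_ball_lt_top).ne) ?_ ?_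
    · intro h hh
      have h1 : ¬ ‖h‖ < ε/2 := by
        intro hc; exact hh.2 (mem_ball_zero_iff.2 hc)
      have : ε/2 ≤ ‖h‖ := not_lt.1 h1
      have h0 : (0:ℝ) ≤ ε/2 := by linarith
      nlinarith
    · exact ((contIntOn (continuous_norm.pow 2) 0 ε)).mono_set Set.diff_subset
  have hmono : ∫ h in B \ Bh, ‖h‖ ^ 2 ≤ ∫ h in B, ‖h‖ ^ 2 := by
    refine setIntegral_mono_set (contIntOn (continuous_norm.pow 2) 0 ε) ?_ ?_
    · filter_upwards with h using by positivity
    · exact HasSubset.Subset.eventuallyLE Set.diff_subset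
  have : (ε/2)^2 * ((volume B).toReal - (volume Bh).toReal) ≤ ∫ h in B, ‖h‖ ^ 2 := by
    rw [← hdiffvol]; exact hlb.trans hmono
  have hfinal : 3/16 * ε^2 * (volume B).toReal ≤ (ε/2)^2 * ((volume B).toReal - (volume Bh).toReal) := by
    rw [hVB, hVBh]
    nlinarith [sq_nonneg ε, mul_nonneg (pow_nonneg hε.le n) hV1nonneg,
      mul_le_mul_of_nonneg_right hratio hV1nonneg]
  linarith

lemma ptwise {r u M : ℝ} (hr : 0 ≤ r) (hu : |u| ≤ r) (hrM : r ≤ M) (hM : 0 < M) :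
    u + (r ^ 2 - u ^ 2) / (2 * M) ≤ r := by
  have h1 : u ≤ r := (abs_le.1 hu).2
  have h2M : (0:ℝ) < 2 * M := by linarith
  have hd : (r ^ 2 - u ^ 2) / (2 * M) ≤ r - u := by
    rw [div_le_iff₀ h2M]
    nlinarith
  linarith

set_option maxHeartbeats 1000000 in
lemma drift (hn : 2 ≤ n) (x : EuclideanSpace ℝ (Fin n)) {ε : ℝ} (hε : 0 < ε) :
    (‖x‖ + 3 / 32 * ε ^ 2 / (2 * (‖x‖ + ε))) * (volume (ball x ε)).toReal
      ≤ ∫ y in ball x ε, ‖y‖ := by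
  set a := ‖x‖ with ha
  have ha0 : 0 ≤ a := norm_nonneg x
  set M := a + ε with hMdef
  have hM : 0 < M := by positivity
  -- the unit vector e with x = a • e
  obtain ⟨e, he, hxe⟩ : ∃ e : EuclideanSpace ℝ (Fin n), ‖e‖ = 1 ∧ x = a • e := by
    by_cases hx : x = 0
    · exact ⟨EuclideanSpace.single ⟨0, by omega⟩ 1, by
        rw [EuclideanSpace.norm_single, norm_one], by simp [hx, ha]⟩
    · refine ⟨‖x‖⁻¹ • x, norm_smul_inv_norm hx, ?_⟩
      rw [smul_smul, ha, mul_inv_cancel₀ (norm_ne_zero_iff.2 hx), one_smul]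
  have hax : (inner ℝ e x : ℝ) = a := by
    rw [hxe, real_inner_smul_right, real_inner_self_eq_norm_sq, he]
    ring
  have hc1 : Continuous fun y : EuclideanSpace ℝ (Fin n) => (inner ℝ e y : ℝ) := continuous_const.inner continuous_id
  -- translation change of variables
  have htrans : ∀ g : EuclideanSpace ℝ (Fin n) → ℝ, ∫ y in ball x ε, g y = ∫ h in ball (0 : EuclideanSpace ℝ (Fin n)) ε, g (x + h) := by
    intro g
    have hmp := measurePreserving_add_left (volume : Measure (EuclideanSpace ℝ (Fin n))) x
    have hemb : MeasurableEmbedding (fun h : EuclideanSpace ℝ (Fin n) => x + h) :=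
      (Homeomorph.addLeft x).measurableEmbedding
    have key := hmp.setIntegral_preimage_emb hemb g (ball x ε)
    have hpre : (fun h : EuclideanSpace ℝ (Fin n) => x + h) ⁻¹' ball x ε = ball 0 ε := by
      ext h
      simp [mem_ball, dist_eq_norm, add_sub_cancel_left]
    rw [hpre] at key
    exact key.symm
  set VB := (volume (ball x ε)).toReal with hVBdef
  have hVB0 : (volume (ball (0 : EuclideanSpace ℝ (Fin n)) ε)).toReal = VB := by
    rw [hVBdef]
    exact congrArg ENNReal.toReal (Measure.addHaar_ball_center volume x ε).symm
  have hVBnn : 0 ≤ VB := ENNReal.toReal_nonneg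
  have hballfin : volume (ball (0:EuclideanSpace ℝ (Fin n)) ε) ≠ ⊤ := measure_ball_lt_top.ne
  set S := ∫ h in ball (0 : EuclideanSpace ℝ (Fin n)) ε, ‖h‖ ^ 2 with hSdef
  set K := ∫ h in ball (0 : EuclideanSpace ℝ (Fin n)) ε, (inner ℝ e h : ℝ) ^ 2 with hKdef
  have hint1 : IntegrableOn (fun h : EuclideanSpace ℝ (Fin n) => (inner ℝ e h : ℝ)) (ball 0 ε) volume :=
    contIntOn hc1 0 ε
  have hint2 : IntegrableOn (fun h : EuclideanSpace ℝ (Fin n) => ‖h‖ ^ 2) (ball (0:EuclideanSpace ℝ (Fin n)) ε) volume :=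
    contIntOn (continuous_norm.pow 2) 0 ε
  have hint1x : IntegrableOn (fun h : EuclideanSpace ℝ (Fin n) => (inner ℝ x h : ℝ)) (ball (0:EuclideanSpace ℝ (Fin n)) ε) volume :=
    contIntOn (continuous_const.inner continuous_id) 0 ε
  have hint3 : IntegrableOn (fun h : EuclideanSpace ℝ (Fin n) => (inner ℝ e h : ℝ) ^ 2) (ball (0:EuclideanSpace ℝ (Fin n)) ε) volume :=
    contIntOn (hc1.pow 2) 0 ε
  have hintc : ∀ c : ℝ, IntegrableOn (fun _ : EuclideanSpace ℝ (Fin n) => c) (ball (0:EuclideanSpace ℝ (Fin n)) ε) volume := fun c =>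
    integrableOn_const measure_ball_lt_top.ne
  -- I1
  have I1 : ∫ y in ball x ε, (inner ℝ e y : ℝ) = a * VB := by
    rw [htrans]
    have : ∀ h : EuclideanSpace ℝ (Fin n), (inner ℝ e (x + h) : ℝ) = a + inner ℝ e h := by
      intro h; rw [inner_add_right, hax]
    simp_rw [this]
    rw [integral_add (hintc a) hint1, int_inner_zero, setIntegral_const, Measure.real_def, hVB0]
    simp [mul_comm]
  -- I2
  have I2 : ∫ y in ball x ε, ‖y‖ ^ 2 = a ^ 2 * VB + S := by
    rw [htrans]
    have : ∀ h : EuclideanSpace ℝ (Fin n), ‖x + h‖ ^ 2 = a ^ 2 + ((2 : ℝ) * inner ℝ x h + ‖h‖ ^ 2) := by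
      intro h
      have := norm_add_sq_real x h
      rw [ha]; ring_nf; ring_nf at this; linarith
    simp_rw [this]
    have ha1 : IntegrableOn (fun h : EuclideanSpace ℝ (Fin n) => (2:ℝ) * inner ℝ x h) (ball (0:EuclideanSpace ℝ (Fin n)) ε) volume :=
      hint1x.const_mul 2
    have ha2 : IntegrableOn (fun h : EuclideanSpace ℝ (Fin n) => (2:ℝ) * inner ℝ x h + ‖h‖ ^ 2) (ball (0:EuclideanSpace ℝ (Fin n)) ε) volume :=
      ha1.add hint2
    rw [integral_add (hintc _) ha2, integral_add ha1 hint2,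
      integral_const_mul, int_inner_zero, setIntegral_const, Measure.real_def, hVB0]
    simp [mul_comm]
    rfl
  -- I3
  have I3 : ∫ y in ball x ε, (inner ℝ e y : ℝ) ^ 2 = a ^ 2 * VB + K := by
    rw [htrans]
    have : ∀ h : EuclideanSpace ℝ (Fin n), (inner ℝ e (x + h) : ℝ) ^ 2
        = a ^ 2 + ((2 * a) * inner ℝ e h + (inner ℝ e h : ℝ) ^ 2) := by
      intro h; rw [inner_add_right, hax]; ring
    simp_rw [this]
    have hb1 : IntegrableOn (fun h : EuclideanSpace ℝ (Fin n) => (2 * a) * inner ℝ e h) (ball (0:EuclideanSpace ℝ (Fin n)) ε) volume :=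
      hint1.const_mul _
    have hb2 : IntegrableOn (fun h : EuclideanSpace ℝ (Fin n) => (2 * a) * inner ℝ e h + (inner ℝ e h : ℝ) ^ 2)
        (ball (0:EuclideanSpace ℝ (Fin n)) ε) volume := hb1.add hint3
    rw [integral_add (hintc _) hb2, integral_add hb1 hint3,
      integral_const_mul, int_inner_zero, setIntegral_const, Measure.real_def, hVB0]
    rw [smul_eq_mul]
    ring_nf
    rfl
  -- pointwise bound integrated
  have hmain : ∫ y in ball x ε, ((inner ℝ e y : ℝ) + (‖y‖ ^ 2 - (inner ℝ e y : ℝ) ^ 2) / (2 * M))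
      ≤ ∫ y in ball x ε, ‖y‖ := by
    refine setIntegral_mono_on ?_ (contIntOn continuous_norm x ε) measurableSet_ball ?_
    · exact (contIntOn hc1 x ε).add
        (((contIntOn (continuous_norm.pow 2) x ε).sub (contIntOn (hc1.pow 2) x ε)).div_const _)
    · intro y hy
      refine ptwise (norm_nonneg y) ?_ ?_ hM
      · have := abs_real_inner_le_norm e y
        rwa [he, one_mul] at this
      · have : dist y x < ε := mem_ball.1 hy
        have h2 : ‖y‖ ≤ ‖x‖ + dist y x := by
          rw [dist_eq_norm]
          have := norm_sub_norm_le y x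
          linarith [norm_sub_norm_le y x]
        linarith
  have hsplit : ∫ y in ball x ε, ((inner ℝ e y : ℝ) + (‖y‖ ^ 2 - (inner ℝ e y : ℝ) ^ 2) / (2 * M))
      = a * VB + ((a ^ 2 * VB + S) - (a ^ 2 * VB + K)) / (2 * M) := by
    have hs1 : IntegrableOn (fun y : EuclideanSpace ℝ (Fin n) => ‖y‖ ^ 2 - (inner ℝ e y : ℝ) ^ 2) (ball x ε) volume :=
      (contIntOn (continuous_norm.pow 2) x ε).sub (contIntOn (hc1.pow 2) x ε)
    have hs2 : IntegrableOn (fun y : EuclideanSpace ℝ (Fin n) => (‖y‖ ^ 2 - (inner ℝ e y : ℝ) ^ 2) / (2 * M))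
        (ball x ε) volume := hs1.div_const _
    rw [integral_add (contIntOn hc1 x ε) hs2, integral_div,
      integral_sub (f := fun y => ‖y‖ ^ 2) (g := fun y => (inner ℝ e y : ℝ) ^ 2)
        (contIntOn (f := fun y => ‖y‖ ^ 2) (continuous_norm.pow 2) x ε)
        (contIntOn (f := fun y => (inner ℝ e y : ℝ) ^ 2) (hc1.pow 2) x ε),
      I1, I2, I3]
  -- lower bounds on S and S - K
  have hS : 3 / 16 * ε ^ 2 * VB ≤ S := by
    have := int_norm_sq_lb hn hε (n := n)
    rwa [hVB0] at this
  have hK : (n : ℝ) * K = S := int_inner_sq (by omega) he ε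
  have hn2 : (2 : ℝ) ≤ (n : ℝ) := by exact_mod_cast hn
  have hSnn : 0 ≤ S :=
    setIntegral_nonneg measurableSet_ball fun h _ => by positivity
  have hSK : S / 2 ≤ S - K := by
    have hnpos : (0:ℝ) < n := by linarith
    have hKval : K = S / n := by
      rw [eq_div_iff (ne_of_gt hnpos)]
      linear_combination hK
    have hdd : S / (n:ℝ) ≤ S / 2 := by
      apply div_le_div_of_nonneg_left hSnn (by norm_num) hn2
    rw [hKval]
    linarith
  calc (a + 3 / 32 * ε ^ 2 / (2 * M)) * VB
      = a * VB + (3 / 16 * ε ^ 2 * VB) / 2 / (2 * M) := by field_simp; ring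
    _ ≤ a * VB + (S / 2) / (2 * M) := by
        have : (3 / 16 * ε ^ 2 * VB) / 2 ≤ S / 2 := by linarith
        have h2M : 0 < 2 * M := by linarith
        gcongr
    _ ≤ a * VB + (S - K) / (2 * M) := by
        have h2M : 0 < 2 * M := by linarith
        gcongr
    _ = ∫ y in ball x ε, ((inner ℝ e y : ℝ) + (‖y‖ ^ 2 - (inner ℝ e y : ℝ) ^ 2) / (2 * M)) := by
        rw [hsplit]; ring_nf
    _ ≤ ∫ y in ball x ε, ‖y‖ := hmain

end Aux

lemma integrable_dirac_cont {n : ℕ} {f : EuclideanSpace ℝ (Fin n) → ℝ} (hf : Continuous f)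
    (a : EuclideanSpace ℝ (Fin n)) : Integrable f (Measure.dirac a) := by
  refine ⟨hf.aestronglyMeasurable, ?_⟩
  simp only [HasFiniteIntegral, lintegral_dirac]
  exact ENNReal.coe_lt_top

theorem cone_one_step_decrease (n : ℕ) (hn : 2 ≤ n) :
    ∃ C : ℝ, 0 < C ∧
      ∀ (x ν : EuclideanSpace ℝ (Fin n)) (ε β η c : ℝ), ‖ν‖ = 1 →
        β ∈ Set.Ioc (0 : ℝ) 1 → 0 < η → 1 < c →
        x ∈ ball (0 : EuclideanSpace ℝ (Fin n)) 1 → ε ∈ Set.Ioo (0 : ℝ) 1 →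
        (∫ y, η * (c - ‖y‖) ∂(ENNReal.ofReal β •
            ((volume (ball x ε))⁻¹ • volume.restrict (ball x ε)) +
          ENNReal.ofReal ((1 - β) / 2) •
            (Measure.dirac (x + ε • ν) + Measure.dirac (x - ε • ν)))) ≤
          η * (c - ‖x‖) - η * C * β * ε ^ 2 / (2 * (‖x‖ + ε)) := by
  refine ⟨3 / 32, by norm_num, ?_⟩
  intro x ν ε β η c hν hβ hη hc hx hε
  obtain ⟨hβ0, hβ1⟩ := hβ
  obtain ⟨hε0, hε1⟩ := hε
  set f : EuclideanSpace ℝ (Fin n) → ℝ := fun y => η * (c - ‖y‖) with hf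
  have hfc : Continuous f := continuous_const.mul (continuous_const.sub continuous_norm)
  set a := ‖x‖ with ha
  have ha0 : 0 ≤ a := norm_nonneg x
  have hVpos : 0 < volume (ball x ε) := measure_ball_pos volume x hε0
  have hVfin : volume (ball x ε) ≠ ⊤ := measure_ball_lt_top.ne
  set VB := (volume (ball x ε)).toReal with hVB
  have hVBpos : 0 < VB := ENNReal.toReal_pos hVpos.ne' hVfin
  set μ1 : Measure (EuclideanSpace ℝ (Fin n)) :=
    (volume (ball x ε))⁻¹ • volume.restrict (ball x ε) with hμ1
  set p := x + ε • ν with hp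
  set q := x - ε • ν with hq
  -- integrability
  have hint_restrict : Integrable f (volume.restrict (ball x ε)) := contIntOn hfc x ε
  have hint_μ1 : Integrable f μ1 :=
    hint_restrict.smul_measure (ENNReal.inv_ne_top.2 hVpos.ne')
  have hint1 : Integrable f (ENNReal.ofReal β • μ1) :=
    hint_μ1.smul_measure ENNReal.ofReal_ne_top
  have hint2 : Integrable f (ENNReal.ofReal ((1 - β) / 2) •
      (Measure.dirac p + Measure.dirac q)) := by
    refine Integrable.smul_measure ?_ ENNReal.ofReal_ne_top
    exact (integrable_add_measure).2
      ⟨integrable_dirac_cont hfc p, integrable_dirac_cont hfc q⟩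
  rw [integral_add_measure hint1 hint2, integral_smul_measure, integral_smul_measure,
    integral_smul_measure,
    integral_add_measure (integrable_dirac_cont hfc p) (integrable_dirac_cont hfc q),
    integral_dirac, integral_dirac,
    ENNReal.toReal_ofReal hβ0.le, ENNReal.toReal_ofReal (by linarith : (0:ℝ) ≤ (1 - β)/2),
    ENNReal.toReal_inv, smul_eq_mul, smul_eq_mul, smul_eq_mul]
  set G := 3 / 32 * ε ^ 2 / (2 * (a + ε)) with hG
  have hGnn : 0 ≤ G := by
    rw [hG]; positivity
  -- ball part
  have hIf : ∫ y in ball x ε, f y = η * c * VB - η * ∫ y in ball x ε, ‖y‖ := by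
    have h1 : ∫ y in ball x ε, f y = ∫ y in ball x ε, (η * c - η * ‖y‖) := by
      refine setIntegral_congr_fun measurableSet_ball fun y _ => ?_
      simp only [hf]; ring
    rw [h1, integral_sub (integrableOn_const (C := η * c) measure_ball_lt_top.ne)
      ((contIntOn continuous_norm x ε).const_mul η), setIntegral_const, Measure.real_def, integral_const_mul,
      smul_eq_mul, mul_comm]
  have hdrift := drift hn x hε0
  have hA : VB⁻¹ * ∫ y in ball x ε, f y ≤ η * c - η * (a + G) := by
    rw [hIf]
    have hIlb : a + G ≤ VB⁻¹ * ∫ y in ball x ε, ‖y‖ := by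
      rw [inv_mul_eq_div, le_div_iff₀ hVBpos]
      exact hdrift
    have : η * (a + G) ≤ η * (VB⁻¹ * ∫ y in ball x ε, ‖y‖) :=
      mul_le_mul_of_nonneg_left hIlb hη.le
    have hexp : VB⁻¹ * (η * c * VB - η * ∫ y in ball x ε, ‖y‖)
        = η * c - η * (VB⁻¹ * ∫ y in ball x ε, ‖y‖) := by
      field_simp
    rw [hexp]
    linarith
  -- dirac part
  have hpq : p + q = x + x := by rw [hp, hq]; abel
  have hxx : ‖x + x‖ = 2 * a := by
    rw [← two_smul ℝ x, norm_smul, ha]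
    norm_num
  have hnormpq : 2 * a ≤ ‖p‖ + ‖q‖ := by
    calc 2 * a = ‖p + q‖ := by rw [hpq, hxx]
      _ ≤ ‖p‖ + ‖q‖ := norm_add_le p q
  have hD : f p + f q ≤ 2 * (η * (c - a)) := by
    simp only [hf]
    nlinarith
  -- combine
  have h1 : β * (VB⁻¹ * ∫ y in ball x ε, f y) ≤ β * (η * c - η * (a + G)) :=
    mul_le_mul_of_nonneg_left hA hβ0.le
  have h2 : (1 - β) / 2 * (f p + f q) ≤ (1 - β) / 2 * (2 * (η * (c - a))) :=
    mul_le_mul_of_nonneg_left hD (by linarith)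
  have hkey : η * (3 / 32) * β * ε ^ 2 / (2 * (a + ε)) = β * (η * G) := by
    rw [hG]; ring
  linarith
end
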